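/- arXiv:1103.0899 — 2 statements merged into one kernel-verified Lean document; each statement's English description precedes it below -/
import Mathlib

section
/- Every continuous idempotent matrix-valued function P on a compact contractible metric space X (i.e. P : X → ℂ^{m×m} continuous with P(x)² = P(x) for all x) is conjugate to a constant diagonal idempotent: there exists a continuous map S : X → GL_m(ℂ) and k ≥ 0 such that S(x)⁻¹ P(x) S(x) = diag(I_k, 0) for all x ∈ X. -/
/-- The `m × m` diagonal matrix with `k` ones followed by zeros on the diagonal. -/
def diagIdem (m k : ℕ) : Matrix (Fin m) (Fin m) ℂ :=
  Matrix.of fun i j => if i = j ∧ (i : ℕ) < k then 1 else 0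



open Module in
lemma idem_exists_basis (m : ℕ) (e : Matrix (Fin m) (Fin m) ℂ) (he : e * e = e) :
    ∃ k ≤ m, ∃ b : Basis (Fin m) ℂ (Fin m → ℂ),
      ∀ j, e.mulVec (b j) = if (j : ℕ) < k then b j else 0 := by
  set f := Matrix.toLin' e with hfdef
  have hf : f ∘ₗ f = f := by
    rw [hfdef, ← Matrix.toLin'_mul, he]
  obtain ⟨p, hp⟩ := (LinearMap.isProj_iff_isIdempotentElem f).mpr hf
  have hc : IsCompl p (LinearMap.ker f) := hp.isCompl
  set k := finrank ℂ p with hk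
  set l := finrank ℂ (LinearMap.ker f) with hl
  have hkl : k + l = m := by
    rw [hk, hl, Submodule.finrank_add_eq_of_isCompl hc]
    simp
  have hkm : k ≤ m := le_of_add_le_left hkl.le
  set bp := finBasis ℂ p
  set bq := finBasis ℂ (LinearMap.ker f)
  set b0 : Basis (Fin k ⊕ Fin l) ℂ (Fin m → ℂ) :=
    (bp.prod bq).map (Submodule.prodEquivOfIsCompl p (LinearMap.ker f) hc)
  have hb0 : ∀ i : Fin k ⊕ Fin l,
      e.mulVec (b0 i) = (if i.isLeft then b0 i else 0) := by
    rintro (a | a)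
    · have hmem : (b0 (Sum.inl a)) ∈ p := by
        simp only [b0, Basis.map_apply, Basis.prod_apply, Sum.elim_inl]
        rw [Submodule.coe_prodEquivOfIsCompl']
        simp [Submodule.coe_mem]
      have : f (b0 (Sum.inl a)) = b0 (Sum.inl a) := hp.map_id _ hmem
      simpa [f, Matrix.toLin'_apply] using this
    · have hmem : (b0 (Sum.inr a)) ∈ LinearMap.ker f := by
        simp only [b0, Basis.map_apply, Basis.prod_apply, Sum.elim_inr]
        rw [Submodule.coe_prodEquivOfIsCompl']
        simp [Submodule.coe_mem]
      have : f (b0 (Sum.inr a)) = 0 := hmem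
      simpa [f, Matrix.toLin'_apply] using this
  refine ⟨k, hkm, b0.reindex ((finSumFinEquiv.trans (finCongr hkl))), ?_⟩
  intro j
  rw [Basis.reindex_apply]
  obtain ⟨i, rfl⟩ := (finSumFinEquiv.trans (finCongr hkl)).surjective j
  rw [Equiv.symm_apply_apply]
  rcases i with a | a
  · have hlt : ((finSumFinEquiv.trans (finCongr hkl)) (Sum.inl a) : ℕ) < k := by
      simp [finSumFinEquiv]
    rw [hb0, if_pos hlt]
    simp
  · have hlt : ¬ ((finSumFinEquiv.trans (finCongr hkl)) (Sum.inr a) : ℕ) < k := by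
      simp [finSumFinEquiv]
    rw [hb0, if_neg hlt]
    simp

lemma idem_conj_diag (m : ℕ) (e : Matrix (Fin m) (Fin m) ℂ) (he : e * e = e) :
    ∃ s : Matrix (Fin m) (Fin m) ℂ, IsUnit s.det ∧
      ∃ k ≤ m, e * s = s * diagIdem m k := by
  obtain ⟨k, hkm, b, hb⟩ := idem_exists_basis m e he
  set s := (Pi.basisFun ℂ (Fin m)).toMatrix ⇑b with hs
  have hunit : IsUnit s.det := by
    have h1 := Module.Basis.toMatrix_mul_toMatrix_flip (Pi.basisFun ℂ (Fin m)) b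
    have : s.det * (b.toMatrix ⇑(Pi.basisFun ℂ (Fin m))).det = 1 := by
      rw [← Matrix.det_mul, h1, Matrix.det_one]
    exact IsUnit.of_mul_eq_one _ this
  have hsij : ∀ i j, s i j = b j i := by
    intro i j
    simp [hs, Module.Basis.toMatrix_apply]
  refine ⟨s, hunit, k, hkm, ?_⟩
  ext i j
  have lhs : (e * s) i j = e.mulVec (b j) i := by
    simp [Matrix.mul_apply, Matrix.mulVec, dotProduct, hsij]
  have rhs : (s * diagIdem m k) i j = if (j : ℕ) < k then b j i else 0 := by
    simp only [Matrix.mul_apply, diagIdem, Matrix.of_apply]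
    rw [Finset.sum_eq_single j]
    · by_cases h : (j : ℕ) < k <;> simp [h, hsij]
    · intro c _ hc
      simp [hc]
    · simp
  rw [lhs, rhs, hb]
  by_cases h : (j : ℕ) < k <;> simp [h]


section Analytic

attribute [local instance] Matrix.linftyOpNormedRing Matrix.linftyOpNormedAlgebra

open unitInterval

lemma conj_to_const (X : Type) [MetricSpace X] [CompactSpace X] [ContractibleSpace X]
    (m : ℕ) (P : X → Matrix (Fin m) (Fin m) ℂ) (hPc : Continuous P)
    (hP : ∀ x, P x * P x = P x) :
    ∃ (x₀ : X) (T : X → Matrix (Fin m) (Fin m) ℂ), Continuous T ∧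
      (∀ x, IsUnit (T x).det) ∧ ∀ x, T x * P x₀ = P x * T x := by
  obtain ⟨y₀, hhom⟩ := id_nullhomotopic X
  obtain ⟨H⟩ := hhom
  set Q : I × X → Matrix (Fin m) (Fin m) ℂ := fun z => P (H z) with hQdef
  have hQc : Continuous Q := hPc.comp H.continuous
  -- bound on ‖Q‖
  obtain ⟨zM, -, hzM⟩ := isCompact_univ.exists_isMaxOn ⟨(0, y₀), trivial⟩
    (continuous_norm.comp hQc).continuousOn
  set M : ℝ := ‖Q zM‖ with hMdef
  have hM0 : 0 ≤ M := norm_nonneg _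
  have hMb : ∀ z, ‖Q z‖ ≤ M := fun z => hzM (Set.mem_univ z)
  set ε : ℝ := (1/2) / (1 + 2*M) with hεdef
  have hεpos : 0 < ε := by positivity
  have hεval : ε * (1 + 2*M) = 1/2 := by
    rw [hεdef]; field_simp
  have hε1 : ε ≤ 1 := by
    rw [hεdef, div_le_one (by positivity)]; linarith
  -- the local conjugator
  have key : ∀ p q : Matrix (Fin m) (Fin m) ℂ, p*p = p → q*q = q → ‖p‖ ≤ M → ‖p - q‖ ≤ ε →
      IsUnit (q*p + (1-q)*(1-p)) ∧ (q*p + (1-q)*(1-p)) * p = q * (q*p + (1-q)*(1-p)) := by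
    intro p q hp hq hpM hpq
    have hqp : (q*p + (1-q)*(1-p)) * p = q * p := by
      have h1 : (1-p) * p = 0 := by rw [sub_mul, one_mul, hp, sub_self]
      rw [add_mul, mul_assoc, hp, mul_assoc, h1, mul_zero, add_zero]
    have hqu : q * (q*p + (1-q)*(1-p)) = q * p := by
      have h2 : q * (1-q) = 0 := by rw [mul_sub, mul_one, hq, sub_self]
      rw [mul_add, ← mul_assoc, hq, ← mul_assoc, h2, zero_mul, add_zero]
    refine ⟨?_, hqp.trans hqu.symm⟩
    have eq1 : q*p + (1-q)*(1-p) = 1 - (p + q - 2*(q*p)) := by noncomm_ring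
    have eq2 : (p-q)*(p-q) + p*(q-p) + (p-q)*p = p*p + q*q - 2*(q*p) := by noncomm_ring
    rw [hp, hq] at eq2
    rw [eq1, ← eq2]
    apply isUnit_one_sub_of_norm_lt_one
    have hn1 : ‖(p-q)*(p-q) + p*(q-p) + (p-q)*p‖
        ≤ ‖p-q‖*‖p-q‖ + ‖p‖*‖p-q‖ + ‖p-q‖*‖p‖ := by
      calc ‖(p-q)*(p-q) + p*(q-p) + (p-q)*p‖
          ≤ ‖(p-q)*(p-q) + p*(q-p)‖ + ‖(p-q)*p‖ := norm_add_le _ _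
        _ ≤ ‖(p-q)*(p-q)‖ + ‖p*(q-p)‖ + ‖(p-q)*p‖ := by
            gcongr; exact norm_add_le _ _
        _ ≤ ‖p-q‖*‖p-q‖ + ‖p‖*‖q-p‖ + ‖p-q‖*‖p‖ := by
            gcongr <;> exact norm_mul_le _ _
        _ = ‖p-q‖*‖p-q‖ + ‖p‖*‖p-q‖ + ‖p-q‖*‖p‖ := by rw [norm_sub_rev q p]
    have ha0 : (0:ℝ) ≤ ‖p-q‖ := norm_nonneg _
    have hp0 : (0:ℝ) ≤ ‖p‖ := norm_nonneg _
    nlinarith [mul_le_mul hpq hpq ha0 hεpos.le, mul_le_mul hpM hpq ha0 hM0,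
      mul_le_mul hpq hpM hp0 hεpos.le]
  -- uniform continuity and subdivision
  have hu := CompactSpace.uniformContinuous_of_continuous hQc
  obtain ⟨δ, hδpos, hδ⟩ := Metric.uniformContinuous_iff.mp hu ε hεpos
  obtain ⟨N0, hN0⟩ := exists_nat_one_div_lt hδpos
  set N : ℕ := N0 + 1 with hNdef
  have hNpos : (0:ℝ) < (N:ℝ) := by positivity
  set t : ℕ → I := fun n => ⟨min ((n:ℝ)/(N:ℝ)) 1,
    le_min (by positivity) zero_le_one, min_le_right _ _⟩ with htdef
  have ht : ∀ n, n ≤ N → (t n : ℝ) = (n:ℝ)/(N:ℝ) := by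
    intro n hn
    simp only [htdef]
    exact min_eq_left (by
      rw [div_le_one hNpos]
      exact_mod_cast hn)
  have ht0 : t 0 = 0 := by
    ext; rw [ht 0 (Nat.zero_le _)]; simp
  have htN : t N = 1 := by
    ext; rw [ht N le_rfl]; field_simp; simp
  -- the chain of idempotents
  set c : ℕ → X → Matrix (Fin m) (Fin m) ℂ := fun n x => Q (t n, x) with hcdef
  have hcc : ∀ n, Continuous (c n) := fun n => hQc.comp (Continuous.prodMk_right (t n))
  have hcidem : ∀ n x, c n x * c n x = c n x := fun n x => hP _
  have hcM : ∀ n x, ‖c n x‖ ≤ M := fun n x => hMb _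
  have hcclose : ∀ n, n + 1 ≤ N → ∀ x, ‖c (n+1) x - c n x‖ ≤ ε := by
    intro n hn x
    have hd : dist ((t (n+1), x) : I × X) (t n, x) < δ := by
      rw [Prod.dist_eq]
      simp only [dist_self]
      rw [max_lt_iff]
      constructor
      · rw [Subtype.dist_eq, Real.dist_eq, ht (n+1) hn, ht n (Nat.le_of_succ_le hn)]
        have : ((n:ℝ)+1)/(N:ℝ) - (n:ℝ)/(N:ℝ) = 1/(N:ℝ) := by field_simp; ring
        rw [show ((n+1 : ℕ):ℝ) = (n:ℝ)+1 by push_cast; ring, this]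
        rw [abs_of_nonneg (by positivity)]
        calc (1:ℝ)/(N:ℝ) = 1/((N0:ℝ)+1) := by norm_cast
          _ < δ := hN0
      · exact hδpos
    have := hδ hd
    rw [dist_eq_norm] at this
    exact this.le
  -- the conjugating chain
  set u : ℕ → X → Matrix (Fin m) (Fin m) ℂ :=
    fun n x => c n x * c (n+1) x + (1 - c n x) * (1 - c (n+1) x) with hudef
  have huc : ∀ n, Continuous (u n) := fun n =>
    ((hcc n).mul (hcc (n+1))).add ((continuous_const.sub (hcc n)).mul
      (continuous_const.sub (hcc (n+1))))
  set W : ℕ → X → Matrix (Fin m) (Fin m) ℂ :=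
    fun n => Nat.rec (fun _ => 1) (fun k Wk x => Wk x * u k x) n with hWdef
  have hWstep : ∀ n x, W (n+1) x = W n x * u n x := fun n x => rfl
  have main : ∀ n, n ≤ N → Continuous (W n) ∧ (∀ x, IsUnit (W n x).det) ∧
      ∀ x, W n x * c n x = c 0 x * W n x := by
    intro n
    induction n with
    | zero =>
      refine fun _ => ⟨continuous_const, fun x => ?_, fun x => ?_⟩
      · rw [show W 0 x = 1 from rfl]; simp
      · rw [show W 0 x = 1 from rfl, one_mul, mul_one]
    | succ n ih =>
      intro hn
      obtain ⟨hWc, hWu, hWconj⟩ := ih (Nat.le_of_succ_le hn)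
      have hkey : ∀ x, IsUnit (u n x) ∧ u n x * c (n+1) x = c n x * u n x :=
        fun x => key (c (n+1) x) (c n x) (hcidem _ _) (hcidem _ _) (hcM _ _)
          (hcclose n hn x)
      refine ⟨?_, ?_, ?_⟩
      · exact hWc.mul (huc n)
      · intro x
        rw [hWstep, Matrix.det_mul]
        exact (hWu x).mul ((Matrix.isUnit_iff_isUnit_det _).mp (hkey x).1)
      · intro x
        rw [hWstep, mul_assoc, (hkey x).2, ← mul_assoc, hWconj x, mul_assoc]
  obtain ⟨hTc, hTu, hTconj⟩ := main N le_rfl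
  refine ⟨y₀, W N, hTc, hTu, fun x => ?_⟩
  have h1 : c N x = P y₀ := by
    simp only [hcdef, hQdef, htN]
    rw [H.apply_one]
    rfl
  have h0 : c 0 x = P x := by
    simp only [hcdef, hQdef, ht0]
    rw [H.apply_zero]
    rfl
  rw [← h1, ← h0]
  exact hTconj x

end Analytic

/-- Every continuous idempotent matrix-valued function `P` on a compact contractible
metric space `X` is conjugate, via a continuous invertible matrix function `S`, to a
constant diagonal idempotent `diag(I_k, 0)`. -/
theorem continuous_idempotent_conjugate_constant_diag
    (X : Type) [MetricSpace X] [CompactSpace X] [ContractibleSpace X]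
    (m : ℕ) (P : X → Matrix (Fin m) (Fin m) ℂ) (hPc : Continuous P)
    (hP : ∀ x, P x * P x = P x) :
    ∃ S : X → Matrix (Fin m) (Fin m) ℂ, Continuous S ∧ (∀ x, IsUnit (S x).det) ∧
      ∃ k : ℕ, k ≤ m ∧ ∀ x, (S x)⁻¹ * P x * S x = diagIdem m k := by
  obtain ⟨x₀, T, hTc, hTu, hTconj⟩ := conj_to_const X m P hPc hP
  obtain ⟨s, hsu, k, hkm, hes⟩ := idem_conj_diag m (P x₀) (hP x₀)
  refine ⟨fun x => T x * s, hTc.mul continuous_const, fun x => ?_, k, hkm, fun x => ?_⟩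
  · rw [Matrix.det_mul]; exact (hTu x).mul hsu
  · have hSu : IsUnit ((T x * s).det) := by
      rw [Matrix.det_mul]; exact (hTu x).mul hsu
    have e1 : P x * (T x * s) = T x * s * diagIdem m k := by
      rw [← mul_assoc, ← hTconj x, mul_assoc, hes, ← mul_assoc]
    show (T x * s)⁻¹ * P x * (T x * s) = diagIdem m k
    rw [mul_assoc, e1, ← mul_assoc, Matrix.nonsing_inv_mul _ hSu, one_mul]
end

section
/- For any f in the polydisc algebra A whose complex partial derivatives up to order N lie in A, and whose range on cl(𝔻)^n omits 0, the reciprocal 1/f also has all complex partial derivatives up to order N in A; hence ∂^{-N}A is an inverse-closed (full) subalgebra of A. -/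
open scoped BigOperators

/-- The open unit polydisc `𝔻ⁿ ⊆ ℂⁿ`. -/
def openPolydisc (n : ℕ) : Set (Fin n → ℂ) := { z | ∀ j, ‖z j‖ < 1 }

/-- The closed unit polydisc `cl(𝔻)ⁿ ⊆ ℂⁿ`. -/
def closedPolydisc (n : ℕ) : Set (Fin n → ℂ) := { z | ∀ j, ‖z j‖ ≤ 1 }

/-- Membership in the polydisc algebra `A`: continuous on the closed polydisc and
holomorphic on the open polydisc. -/
def MemA (n : ℕ) (f : (Fin n → ℂ) → ℂ) : Prop :=
  ContinuousOn f (closedPolydisc n) ∧ DifferentiableOn ℂ f (openPolydisc n)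

/-- The complex partial derivative with respect to the `j`-th coordinate. -/
noncomputable def pd {n : ℕ} (j : Fin n) (f : (Fin n → ℂ) → ℂ) : (Fin n → ℂ) → ℂ :=
  fun z => fderiv ℂ f z (Pi.single j 1)

/-- The `m`-fold partial derivative with respect to the `j`-th coordinate. -/
noncomputable def pdPow {n : ℕ} (j : Fin n) : ℕ → ((Fin n → ℂ) → ℂ) → ((Fin n → ℂ) → ℂ)
  | 0 => id
  | m + 1 => fun f => pd j (pdPow j m f)

/-- The mixed partial derivative `∂^{α₁+⋯+αₙ} f / ∂z₁^{α₁} ⋯ ∂zₙ^{αₙ}`. -/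
noncomputable def pdMulti {n : ℕ} (α : Fin n → ℕ) (f : (Fin n → ℂ) → ℂ) :
    (Fin n → ℂ) → ℂ :=
  (List.finRange n).foldr (fun j g => pdPow j (α j) g) f

/-- Membership in `∂^{-N}A`: `f` lies in the polydisc algebra `A` and each of its
complex partial derivatives of total order at most `N` (computed on the open polydisc)
extends to a member of `A`. -/
def MemDN (n N : ℕ) (f : (Fin n → ℂ) → ℂ) : Prop :=
  MemA n f ∧ ∀ α : Fin n → ℕ, (∑ j, α j) ≤ N →
    ∃ g, MemA n g ∧ ∀ z ∈ openPolydisc n, g z = pdMulti α f z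

section Aux

lemma isOpen_openPolydisc (n : ℕ) : IsOpen (openPolydisc n) := by
  have : openPolydisc n = ⋂ j, (fun z : Fin n → ℂ => z j) ⁻¹' Metric.ball 0 1 := by
    ext z; simp [openPolydisc, Metric.mem_ball, dist_zero_right]
  rw [this]
  exact isOpen_iInter_of_finite fun j => Metric.isOpen_ball.preimage (continuous_apply j)

lemma open_subset_closed (n : ℕ) : openPolydisc n ⊆ closedPolydisc n :=
  fun _ hz j => (hz j).le

/-- `h` extends to a member of the polydisc algebra. -/
def ExtA (n : ℕ) (h : (Fin n → ℂ) → ℂ) : Prop :=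
  ∃ g, MemA n g ∧ ∀ z ∈ openPolydisc n, g z = h z

/-- `h` and all of its iterated partial derivatives (in any order) of order at most `k`
extend to members of the polydisc algebra. -/
def Good (n : ℕ) : ℕ → ((Fin n → ℂ) → ℂ) → Prop
  | 0, h => ExtA n h
  | (k+1), h => ExtA n h ∧ ∀ j, Good n k (pd j h)

variable {n : ℕ}

lemma ExtA.diffOn {h} (H : ExtA n h) : DifferentiableOn ℂ h (openPolydisc n) := by
  obtain ⟨g, hg, he⟩ := H
  exact hg.2.congr fun z hz => (he z hz).symm

lemma ExtA.diffAt {h} (H : ExtA n h) {z} (hz : z ∈ openPolydisc n) :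
    DifferentiableAt ℂ h z :=
  H.diffOn.differentiableAt ((isOpen_openPolydisc n).mem_nhds hz)

lemma pd_congr {h h' : (Fin n → ℂ) → ℂ} (j : Fin n)
    (he : ∀ z ∈ openPolydisc n, h z = h' z) {z} (hz : z ∈ openPolydisc n) :
    pd j h z = pd j h' z := by
  have : h =ᶠ[nhds z] h' :=
    Filter.eventually_of_mem ((isOpen_openPolydisc n).mem_nhds hz) he
  simp only [pd, this.fderiv_eq]

lemma ExtA.congr {h h'} (H : ExtA n h) (he : ∀ z ∈ openPolydisc n, h z = h' z) :
    ExtA n h' := by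
  obtain ⟨g, hg, hge⟩ := H
  exact ⟨g, hg, fun z hz => (hge z hz).trans (he z hz)⟩

lemma Good.congr : ∀ {k} {h h' : (Fin n → ℂ) → ℂ}, Good n k h →
    (∀ z ∈ openPolydisc n, h z = h' z) → Good n k h'
  | 0, _, _, H, he => ExtA.congr H he
  | (_+1), _, _, H, he =>
    ⟨H.1.congr he, fun j => (H.2 j).congr fun _ hz => pd_congr j he hz⟩

lemma Good.extA : ∀ {k} {h}, Good n k h → ExtA n h
  | 0, _, H => H
  | (_+1), _, H => H.1

lemma Good.mono : ∀ {k} {h}, Good n (k+1) h → Good n k h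
  | 0, _, H => H.1
  | (_+1), _, H => ⟨H.1, fun j => (H.2 j).mono⟩

lemma Good.pd {k h} (H : Good n (k+1) h) (j : Fin n) : Good n k (pd j h) := H.2 j

lemma pd_const (c : ℂ) (j : Fin n) (z : Fin n → ℂ) : pd j (fun _ => c) z = 0 := by
  simp [pd]

lemma pd_add {h₁ h₂ : (Fin n → ℂ) → ℂ} (j : Fin n) {z : Fin n → ℂ}
    (d1 : DifferentiableAt ℂ h₁ z) (d2 : DifferentiableAt ℂ h₂ z) :
    pd j (fun w => h₁ w + h₂ w) z = pd j h₁ z + pd j h₂ z := by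
  simp [pd, fderiv_fun_add d1 d2]

lemma pd_mul {h₁ h₂ : (Fin n → ℂ) → ℂ} (j : Fin n) {z : Fin n → ℂ}
    (d1 : DifferentiableAt ℂ h₁ z) (d2 : DifferentiableAt ℂ h₂ z) :
    pd j (fun w => h₁ w * h₂ w) z = h₁ z * pd j h₂ z + h₂ z * pd j h₁ z := by
  simp [pd, fderiv_fun_mul d1 d2]

lemma pd_inv {h : (Fin n → ℂ) → ℂ} (j : Fin n) {z : Fin n → ℂ}
    (d : DifferentiableAt ℂ h z) (hz : h z ≠ 0) :
    pd j (fun w => (h w)⁻¹) z = -((h z)⁻¹ * (h z)⁻¹ * pd j h z) := by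
  have h1 : HasFDerivAt (fun w => (h w)⁻¹) ((-(h z ^ 2)⁻¹) • fderiv ℂ h z) z :=
    (hasDerivAt_inv hz).comp_hasFDerivAt z d.hasFDerivAt
  rw [pd, h1.fderiv]
  simp only [ContinuousLinearMap.coe_smul', Pi.smul_apply, smul_eq_mul, pow_two, mul_inv]
  show _ = -((h z)⁻¹ * (h z)⁻¹ * fderiv ℂ h z (Pi.single j 1))
  ring

lemma Good.const : ∀ (k : ℕ) (c : ℂ), Good n k (fun _ => c)
  | 0, c => ⟨fun _ => c, ⟨continuousOn_const, differentiableOn_const c⟩, fun _ _ => rfl⟩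
  | (k+1), c =>
    ⟨⟨fun _ => c, ⟨continuousOn_const, differentiableOn_const c⟩, fun _ _ => rfl⟩,
      fun j => (Good.const k 0).congr fun z hz => (pd_const c j z).symm⟩

lemma MemA.add {g₁ g₂} (H1 : MemA n g₁) (H2 : MemA n g₂) :
    MemA n (fun z => g₁ z + g₂ z) :=
  ⟨H1.1.add H2.1, H1.2.add H2.2⟩

lemma MemA.mul {g₁ g₂} (H1 : MemA n g₁) (H2 : MemA n g₂) :
    MemA n (fun z => g₁ z * g₂ z) :=
  ⟨H1.1.mul H2.1, H1.2.mul H2.2⟩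

lemma ExtA.add {h₁ h₂} (H1 : ExtA n h₁) (H2 : ExtA n h₂) :
    ExtA n (fun z => h₁ z + h₂ z) := by
  obtain ⟨g₁, hg₁, he₁⟩ := H1; obtain ⟨g₂, hg₂, he₂⟩ := H2
  exact ⟨fun z => g₁ z + g₂ z, hg₁.add hg₂,
    fun z hz => by simp only []; rw [he₁ z hz, he₂ z hz]⟩

lemma ExtA.mul {h₁ h₂} (H1 : ExtA n h₁) (H2 : ExtA n h₂) :
    ExtA n (fun z => h₁ z * h₂ z) := by
  obtain ⟨g₁, hg₁, he₁⟩ := H1; obtain ⟨g₂, hg₂, he₂⟩ := H2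
  exact ⟨fun z => g₁ z * g₂ z, hg₁.mul hg₂,
    fun z hz => by simp only []; rw [he₁ z hz, he₂ z hz]⟩

lemma Good.add : ∀ {k} {h₁ h₂ : (Fin n → ℂ) → ℂ}, Good n k h₁ → Good n k h₂ →
    Good n k (fun z => h₁ z + h₂ z)
  | 0, _, _, H1, H2 => ExtA.add H1 H2
  | (_+1), _, _, H1, H2 =>
    ⟨H1.1.add H2.1, fun j =>
      (Good.add (H1.2 j) (H2.2 j)).congr fun z hz =>
        (pd_add j (H1.1.diffAt hz) (H2.1.diffAt hz)).symm⟩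

lemma Good.mul : ∀ {k} {h₁ h₂ : (Fin n → ℂ) → ℂ}, Good n k h₁ → Good n k h₂ →
    Good n k (fun z => h₁ z * h₂ z)
  | 0, _, _, H1, H2 => ExtA.mul H1 H2
  | (_+1), _, _, H1, H2 =>
    ⟨H1.1.mul H2.1, fun j =>
      (Good.add (Good.mul H1.mono (H2.2 j)) (Good.mul H2.mono (H1.2 j))).congr
        fun z hz => (pd_mul j (H1.1.diffAt hz) (H2.1.diffAt hz)).symm⟩

lemma Good.neg {k} {h : (Fin n → ℂ) → ℂ} (H : Good n k h) :
    Good n k (fun z => -(h z)) :=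
  ((Good.const k (-1)).mul H).congr fun z _ => by ring

/-- Iterated partial derivatives indexed by a list of coordinates. -/
noncomputable def pdL {n : ℕ} (l : List (Fin n)) (h : (Fin n → ℂ) → ℂ) :
    (Fin n → ℂ) → ℂ := l.foldr pd h

@[simp] lemma pdL_nil (h : (Fin n → ℂ) → ℂ) : pdL [] h = h := rfl
@[simp] lemma pdL_cons (j : Fin n) (l : List (Fin n)) (h : (Fin n → ℂ) → ℂ) :
    pdL (j :: l) h = pd j (pdL l h) := rfl

lemma pdL_append (l₁ l₂ : List (Fin n)) (h : (Fin n → ℂ) → ℂ) :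
    pdL (l₁ ++ l₂) h = pdL l₁ (pdL l₂ h) := by
  simp [pdL, List.foldr_append]

lemma pdPow_eq_pdL (j : Fin n) : ∀ (m : ℕ) (h : (Fin n → ℂ) → ℂ),
    pdPow j m h = pdL (List.replicate m j) h
  | 0, _ => rfl
  | (m+1), h => by
    simp [pdPow, List.replicate_succ, pdPow_eq_pdL j m h]

/-- The canonical list representing a multi-index. -/
def canonList {n : ℕ} (α : Fin n → ℕ) : List (Fin n) :=
  (List.finRange n).foldr (fun i L => List.replicate (α i) i ++ L) []

lemma pdMulti_eq_pdL (α : Fin n → ℕ) (h : (Fin n → ℂ) → ℂ) :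
    pdMulti α h = pdL (canonList α) h := by
  unfold pdMulti canonList
  induction (List.finRange n) with
  | nil => rfl
  | cons i L ih =>
    rw [List.foldr_cons, ih, pdPow_eq_pdL, ← pdL_append]
    rfl

lemma count_canonList (α : Fin n → ℕ) (j : Fin n) :
    (canonList α).count j = α j := by
  unfold canonList
  have key : ∀ L : List (Fin n), L.Nodup →
      ((L.foldr (fun i M => List.replicate (α i) i ++ M) []).count j)
        = if j ∈ L then α j else 0 := by
    intro L hL
    induction L with
    | nil => simp
    | cons i L ih =>
      have hnd := List.nodup_cons.mp hL
      simp only [List.foldr_cons, List.count_append, List.count_replicate,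
        ih hnd.2, List.mem_cons]
      by_cases hji : j = i
      · subst hji
        simp [hnd.1]
      · simp [hji, Ne.symm hji]
  rw [key _ (List.nodup_finRange n)]
  simp [List.mem_finRange]

lemma length_canonList (α : Fin n → ℕ) :
    (canonList α).length = ∑ j, α j := by
  unfold canonList
  rw [Fin.sum_univ_def]
  induction (List.finRange n) with
  | nil => rfl
  | cons i L ih => simp only [List.foldr_cons, List.length_append, List.length_replicate, ih,
      List.map_cons, List.sum_cons]

lemma length_eq_sum_count (l : List (Fin n)) :
    l.length = ∑ j, l.count j := by
  induction l with
  | nil => simp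
  | cons i l ih =>
    simp only [List.length_cons, ih, List.count_cons]
    rw [Finset.sum_add_distrib]
    simp [Finset.sum_ite_eq]

lemma clm_eq_sum (L : (Fin n → ℂ) →L[ℂ] ℂ) (v : Fin n → ℂ) :
    L v = ∑ j, v j * L (Pi.single j 1) := by
  have hv : v = ∑ j, v j • (Pi.single j 1 : Fin n → ℂ) := by
    funext i
    simp [Finset.sum_apply, Pi.single_apply]
  conv_lhs => rw [hv]
  rw [map_sum]
  simp

/-- Clairaut/Schwarz: mixed complex partial derivatives commute. -/
lemma pd_swap {h : (Fin n → ℂ) → ℂ}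
    (hd : ∀ z ∈ openPolydisc n, DifferentiableAt ℂ h z)
    (hd1 : ∀ j, ∀ z ∈ openPolydisc n, DifferentiableAt ℂ (pd j h) z)
    (i j : Fin n) {x : Fin n → ℂ} (hx : x ∈ openPolydisc n) :
    pd i (pd j h) x = pd j (pd i h) x := by
  classical
  set U := openPolydisc n with hU
  have hUo : IsOpen U := isOpen_openPolydisc n
  set f' : (Fin n → ℂ) → (Fin n → ℂ) →L[ℂ] ℂ :=
    fun z => ∑ k, pd k h z • (ContinuousLinearMap.proj k :
      ((Fin n → ℂ) →L[ℂ] ℂ)) with hf'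
  have hf'app : ∀ z v, f' z v = ∑ k, pd k h z * v k := by
    intro z v
    simp [hf', ContinuousLinearMap.sum_apply]
  have heq : ∀ z ∈ U, f' z = fderiv ℂ h z := by
    intro z hz
    ext v
    rw [hf'app, clm_eq_sum (fderiv ℂ h z) v]
    congr 1; funext k; rw [mul_comm]; rfl
  have hev : ∀ᶠ y in nhds x, HasFDerivAt h (f' y) y := by
    filter_upwards [hUo.mem_nhds hx] with y hy
    rw [heq y hy]
    exact (hd y hy).hasFDerivAt
  have hdf' : DifferentiableAt ℂ f' x := by
    apply DifferentiableAt.fun_sum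
    intro k _
    exact ((hd1 k x hx).smul_const _)
  have hsym := second_derivative_symmetric_of_eventually hev hdf'.hasFDerivAt
  have happ : ∀ (k : Fin n) (w : Fin n → ℂ),
      pd k h w = f' w (Pi.single k 1) := by
    intro k w
    rw [hf'app]
    simp [Pi.single_apply]
  have key : ∀ (a b : Fin n),
      pd a (pd b h) x = fderiv ℂ f' x (Pi.single a 1) (Pi.single b 1) := by
    intro a b
    have hev2 : pd b h =ᶠ[nhds x] fun z => f' z (Pi.single b 1) :=
      Filter.Eventually.of_forall fun w => happ b w
    have hfd : fderiv ℂ (pd b h) x = fderiv ℂ (fun z => f' z (Pi.single b 1)) x :=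
      hev2.fderiv_eq
    rw [pd, hfd]
    set A := ContinuousLinearMap.apply ℂ ℂ (Pi.single b (1:ℂ) : Fin n → ℂ) with hA
    have hcomp : HasFDerivAt (⇑A ∘ f') (A.comp (fderiv ℂ f' x)) x :=
      A.hasFDerivAt.comp x hdf'.hasFDerivAt
    have hfe : (fun z => f' z (Pi.single b 1)) = (⇑A ∘ f') := rfl
    rw [hfe, hcomp.fderiv]
    rfl
  rw [key i j, key j i, hsym]

/-- Iterated partial derivatives of `f` depend only on the multi-index of counts. -/
lemma pdL_eq_pdMulti_count (n N : ℕ) (f : (Fin n → ℂ) → ℂ) (hf : MemDN n N f) :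
    ∀ m, m ≤ N → ∀ l : List (Fin n), l.length = m →
      ∀ z ∈ openPolydisc n, pdL l f z = pdMulti (fun j => l.count j) f z := by
  intro m
  induction m using Nat.strong_induction_on with
  | _ m IH =>
    intro hmN l hl
    have hext : ∀ (β : Fin n → ℕ), (∑ j, β j) ≤ N → ExtA n (pdMulti β f) := by
      intro β hβ; obtain ⟨g, hg, he⟩ := hf.2 β hβ; exact ⟨g, hg, he⟩
    have hdiff : ∀ l' : List (Fin n), l'.length < m →
        ∀ z ∈ openPolydisc n, DifferentiableAt ℂ (pdL l' f) z := by
      intro l' hl' z hz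
      have hext' : ExtA n (pdMulti (fun j => l'.count j) f) := by
        apply hext
        rw [← length_eq_sum_count]
        omega
      have heq' := IH l'.length hl' (by omega) l' rfl
      exact (hext'.congr fun w hw => (heq' w hw).symm).diffAt hz
    have F : ∀ l₁ l₂ : List (Fin n), l₁.Perm l₂ → l₁.length ≤ m →
        ∀ z ∈ openPolydisc n, pdL l₁ f z = pdL l₂ f z := by
      intro l₁ l₂ hp
      induction hp with
      | nil => intro _ z _; rfl
      | cons a p ih =>
        intro hlen z hz
        have hlen' : _ ≤ m := le_trans (Nat.le_succ _) hlen
        exact pd_congr a (fun w hw => ih (by simpa using Nat.le_of_succ_le hlen) w hw) hz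
      | swap a b t =>
        intro hlen z hz
        simp only [pdL_cons]
        have h2 : t.length + 2 ≤ m := by simp [Nat.succ_eq_add_one] at hlen; omega
        refine pd_swap (fun w hw => hdiff t (by omega) w hw)
          (fun k w hw => ?_) b a hz
        have : pd k (pdL t f) = pdL (k :: t) f := rfl
        rw [this]
        exact hdiff (k :: t) (by simp; omega) w hw
      | trans p q ih₁ ih₂ =>
        intro hlen z hz
        rw [ih₁ hlen z hz, ih₂ (by rw [← p.length_eq]; exact hlen) z hz]
    intro z hz
    have hperm : l.Perm (canonList fun j => l.count j) :=
      List.perm_iff_count.mpr fun a => by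
        simpa using (count_canonList (fun j => l.count j) a).symm
    rw [F l _ hperm (le_of_eq hl) z hz, pdMulti_eq_pdL]

lemma extA_pdL (n N : ℕ) (f : (Fin n → ℂ) → ℂ) (hf : MemDN n N f)
    (l : List (Fin n)) (hl : l.length ≤ N) : ExtA n (pdL l f) := by
  obtain ⟨g, hg, he⟩ := hf.2 (fun j => l.count j)
    (by rw [← length_eq_sum_count]; exact hl)
  exact ⟨g, hg, fun z hz => (he z hz).trans
    (pdL_eq_pdMulti_count n N f hf l.length hl l rfl z hz).symm⟩

lemma good_of_pdL : ∀ (k : ℕ) (h : (Fin n → ℂ) → ℂ),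
    (∀ l : List (Fin n), l.length ≤ k → ExtA n (pdL l h)) → Good n k h
  | 0, h, H => H [] (by simp)
  | (k+1), h, H =>
    ⟨H [] (by simp), fun j => good_of_pdL k (pd j h) (fun l hl => by
      have he : pdL l (pd j h) = pdL (l ++ [j]) h := by rw [pdL_append]; rfl
      rw [he]
      exact H (l ++ [j]) (by simp; omega))⟩

lemma Good.pdL_sub {k : ℕ} {h : (Fin n → ℂ) → ℂ} (H : Good n k h) :
    ∀ l : List (Fin n), l.length ≤ k → Good n (k - l.length) (pdL l h) := by
  intro l
  induction l with
  | nil => intro _; simpa using H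
  | cons j t ih =>
    intro hl
    have h1 : t.length ≤ k := by simp at hl; omega
    have h2 := ih h1
    have h3 : k - t.length = (k - (t.length + 1)) + 1 := by simp at hl; omega
    rw [h3] at h2
    simpa using h2.pd j

lemma good_inv (n : ℕ) (f : (Fin n → ℂ) → ℂ) (hfA : MemA n f)
    (hne : ∀ z ∈ closedPolydisc n, f z ≠ 0) :
    ∀ k, Good n k f → Good n k (fun z => (f z)⁻¹) := by
  have hext : ExtA n (fun z => (f z)⁻¹) :=
    ⟨fun z => (f z)⁻¹, ⟨hfA.1.inv₀ hne,
      hfA.2.inv fun z hz => hne z (open_subset_closed n hz)⟩, fun _ _ => rfl⟩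
  intro k
  induction k with
  | zero => intro _; exact hext
  | succ k ihk =>
    intro H
    refine ⟨hext, fun j => ?_⟩
    have IH : Good n k (fun z => (f z)⁻¹) := ihk H.mono
    have HG : Good n k (fun z => -((f z)⁻¹ * (f z)⁻¹ * pd j f z)) :=
      ((IH.mul IH).mul (H.pd j)).neg
    refine HG.congr fun z hz => ?_
    exact (pd_inv j (H.1.diffAt hz) (hne z (open_subset_closed n hz))).symm

end Aux

/-- If `f` lies in the polydisc algebra with all complex partial derivatives up to
order `N` in `A`, and the range of `f` on the closed polydisc omits `0`, then `1/f`
also has all complex partial derivatives up to order `N` in `A`: the algebra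
`∂^{-N}A` is inverse closed in `A`. -/
theorem memDN_inverse_closed (n N : ℕ) (hN : 0 < N)
    (f : (Fin n → ℂ) → ℂ) (hf : MemDN n N f)
    (hne : ∀ z ∈ closedPolydisc n, f z ≠ 0) :
    ∃ g, MemDN n N g ∧ ∀ z ∈ closedPolydisc n, g z = (f z)⁻¹ := by
  have hGf : Good n N f :=
    good_of_pdL N f fun l hl => extA_pdL n N f hf l hl
  have hGinv : Good n N (fun z => (f z)⁻¹) := good_inv n f hf.1 hne N hGf
  refine ⟨fun z => (f z)⁻¹, ⟨⟨hf.1.1.inv₀ hne,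
    hf.1.2.inv fun z hz => hne z (open_subset_closed n hz)⟩, ?_⟩, fun _ _ => rfl⟩
  intro α hα
  have hlen : (canonList α).length ≤ N := by rw [length_canonList]; exact hα
  have hG0 : Good n (N - (canonList α).length) (pdL (canonList α) (fun z => (f z)⁻¹)) :=
    hGinv.pdL_sub (canonList α) hlen
  obtain ⟨g, hg, he⟩ := hG0.extA
  exact ⟨g, hg, fun z hz => by rw [he z hz, pdMulti_eq_pdL]⟩
end
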